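/- (Euler's conjecture, proved by Gauss) Let p ≡ 1 (mod 8) be a prime, and write p = a² + b² with a odd and b even. Then 2 is a fourth power modulo p if and only if 8 divides b. -/

import Mathlib

open Subgroup in
lemma aux_pow4 (p : ℕ) [Fact p.Prime] (e : ℕ) (he : p - 1 = 8 * e) (he0 : 0 < e)
    (u : ZMod p) (hu : u ≠ 0) :
    (∃ x : ZMod p, x ^ 4 = u) ↔ u ^ (2 * e) = 1 := by
  constructor
  · rintro ⟨x, rfl⟩
    have hx : x ≠ 0 := by rintro rfl; rw [zero_pow (by norm_num)] at hu; exact hu rfl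
    calc (x ^ 4) ^ (2 * e) = (x ^ (p-1)) := by rw [← pow_mul, he]; ring_nf
    _ = 1 := ZMod.pow_card_sub_one_eq_one hx
  · intro h1
    obtain ⟨g, hg⟩ := IsCyclic.exists_generator (α := (ZMod p)ˣ)
    have hord : orderOf g = p - 1 := by
      rw [orderOf_eq_card_of_forall_mem_zpowers hg, Nat.card_eq_fintype_card,
        ZMod.card_units_eq_totient, Nat.totient_prime (Fact.out)]
    obtain ⟨m, hm'⟩ := (mem_powers_iff_mem_zpowers).2 (hg (Units.mk0 u hu))
    have hm : g ^ m = Units.mk0 u hu := hm'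
    have h2 : (g ^ m) ^ (2 * e) = 1 := by
      rw [hm]
      ext
      push_cast
      simpa using h1
    have h3 : (p - 1) ∣ m * (2 * e) := by
      rw [← hord]; exact orderOf_dvd_of_pow_eq_one (by rwa [← pow_mul] at h2)
    have h4 : 4 ∣ m := by
      rcases h3 with ⟨c, hc⟩
      rw [he] at hc
      have h5 : 2 * e * m = 2 * e * (4 * c) := by ring_nf; ring_nf at hc; linarith
      exact ⟨c, Nat.eq_of_mul_eq_mul_left (by omega) h5⟩
    obtain ⟨m', rfl⟩ := h4
    refine ⟨((g ^ m' : (ZMod p)ˣ) : ZMod p), ?_⟩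
    have h5 : ((g ^ m') ^ 4 : (ZMod p)ˣ) = Units.mk0 u hu := by rw [← pow_mul, mul_comm]; exact hm
    calc ((g ^ m' : (ZMod p)ˣ) : ZMod p) ^ 4 = (((g ^ m') ^ 4 : (ZMod p)ˣ) : ZMod p) := by push_cast; ring
    _ = u := by rw [h5]; rfl

lemma aux_chi8 (t : ℕ) (ht : t % 2 = 1) (n : ℤ) (h : (t : ℤ)^2 = 8*n+1) :
    ZMod.χ₈ (t : ZMod 8) = if Even n then 1 else -1 := by
  have key : (t % 8 = 1 ∨ t % 8 = 7) ↔ Even n := by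
    have hq : (t : ℤ) = 8 * ((t : ℤ) / 8) + (t % 8 : ℕ) := by
      push_cast [Int.natCast_mod]
      omega
    set q : ℤ := (t : ℤ) / 8 with hqdef
    obtain ⟨Q, hQ⟩ : ∃ Q, q^2 = Q := ⟨_, rfl⟩
    have hr : t % 8 = 1 ∨ t % 8 = 3 ∨ t % 8 = 5 ∨ t % 8 = 7 := by omega
    rcases hr with hr | hr | hr | hr <;>
      rw [hr] at hq <;>
      [ (have h8 : 8 * n = 8 * (8*Q + 2*q) := by rw [← hQ]; linear_combination -h + hq * ((t:ℤ) + 8*q + 1));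
        (have h8 : 8 * n = 8 * (8*Q + 6*q + 1) := by rw [← hQ]; linear_combination -h + hq * ((t:ℤ) + 8*q + 3));
        (have h8 : 8 * n = 8 * (8*Q + 10*q + 3) := by rw [← hQ]; linear_combination -h + hq * ((t:ℤ) + 8*q + 5));
        (have h8 : 8 * n = 8 * (8*Q + 14*q + 6) := by rw [← hQ]; linear_combination -h + hq * ((t:ℤ) + 8*q + 7))] <;>
      rw [Int.even_iff] <;>
      omega
  rw [ZMod.χ₈_nat_eq_if_mod_eight, if_neg (by omega : ¬ (t % 2 = 0))]
  simp only [key]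

-- J(n | p) = J(n.natAbs | p) for p ≡ 1 mod 4
lemma aux_jac_natAbs (p : ℕ) (hp4 : p % 4 = 1) (n : ℤ) :
    jacobiSym n p = jacobiSym (n.natAbs : ℤ) p := by
  have hodd : Odd p := Nat.odd_iff.mpr (by omega)
  rcases Int.natAbs_eq n with h | h
  · rw [← h]
  · conv_lhs => rw [h]
    rw [jacobiSym.neg _ hodd, ZMod.χ₄_nat_one_mod_four hp4, one_mul]

lemma aux_jac_two (p : ℕ) (hp8 : p % 8 = 1) : jacobiSym 2 p = 1 := by
  have hodd : Odd p := Nat.odd_iff.mpr (by omega)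
  rw [jacobiSym.at_two hodd, ZMod.χ₈_nat_mod_eight, hp8]
  rfl

-- χ(b) = 1
lemma aux_leg_b (p : ℕ) [Fact p.Prime] (hp8 : p % 8 = 1) (a b : ℤ) (hb0 : b ≠ 0)
    (hab : (p : ℤ) = a ^ 2 + b ^ 2) (hcop : Int.gcd a b = 1) :
    jacobiSym b p = 1 := by
  have hp4 : p % 4 = 1 := by omega
  obtain ⟨t, u, hu, htu⟩ := Nat.exists_eq_two_pow_mul_odd (n := b.natAbs) (by simpa using hb0)
  have hub : (u : ℤ) ∣ b :=
    dvd_trans (Int.natCast_dvd_natCast.2 ⟨2 ^ t, by rw [htu]; ring⟩) (Int.natAbs_dvd.2 dvd_rfl)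
  have hub' : u ∣ b.natAbs := ⟨2 ^ t, by rw [htu]; ring⟩
  have hgau : Int.gcd a (u : ℤ) = 1 := by
    have := Nat.Coprime.coprime_dvd_right hub' hcop
    simpa [Int.gcd] using this
  have hmod : ((p : ℤ)) % u = (a ^ 2) % u := by
    refine Int.modEq_iff_dvd.mpr ?_
    rw [hab, show a ^ 2 - (a ^ 2 + b ^ 2) = -(b ^ 2) by ring]
    exact dvd_neg.mpr (hub.pow two_ne_zero)
  have hrec : jacobiSym (p : ℤ) u = jacobiSym (u : ℤ) p :=
    jacobiSym.quadratic_reciprocity_one_mod_four hp4 hu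
  have hJu : jacobiSym (u : ℤ) p = 1 := by
    rw [← hrec, jacobiSym.mod_left' hmod, jacobiSym.sq_one' hgau]
  calc jacobiSym b p = jacobiSym (b.natAbs : ℤ) p := aux_jac_natAbs p hp4 b
  _ = jacobiSym 2 p ^ t * jacobiSym (u : ℤ) p := by
      rw [htu]; push_cast
      rw [jacobiSym.mul_left, jacobiSym.pow_left]
  _ = 1 := by rw [aux_jac_two p hp8, hJu, one_pow, one_mul]

lemma aux_leg_s (p : ℕ) [Fact p.Prime] (hp8 : p % 8 = 1) (s r : ℤ) (hodd : Odd s)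
    (h2p : 2 * (p : ℤ) = s ^ 2 + r ^ 2) (hgcd : Int.gcd r s = 1) :
    ZMod.χ₈ (s.natAbs : ZMod 8) * jacobiSym s p = 1 := by
  have hp4 : p % 4 = 1 := by omega
  set t : ℕ := s.natAbs with htdef
  have hoddt : Odd t := Int.natAbs_odd.mpr hodd
  have hts : (t : ℤ) ∣ s := Int.natAbs_dvd.2 dvd_rfl
  have hgcd' : Int.gcd r (t : ℤ) = 1 := by simpa [Int.gcd] using hgcd
  have hmod : (2 * (p : ℤ)) % t = (r ^ 2) % t := by
    refine Int.modEq_iff_dvd.mpr ?_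
    rw [show r ^ 2 - 2 * (p:ℤ) = -(s^2) by linear_combination -h2p]
    exact dvd_neg.mpr (hts.pow two_ne_zero)
  have h1 : ZMod.χ₈ (t : ZMod 8) * jacobiSym (p : ℤ) t = 1 := by
    rw [← jacobiSym.at_two hoddt, ← jacobiSym.mul_left, jacobiSym.mod_left' hmod,
      jacobiSym.sq_one' hgcd']
  rw [aux_jac_natAbs p hp4 s, ← htdef,
    ← jacobiSym.quadratic_reciprocity_one_mod_four hp4 hoddt]
  exact h1

/-- Euler's conjecture, proved by Gauss: let `p ≡ 1 (mod 8)` be prime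
and write `p = a² + b²` with `a` odd and `b` even.  Then `2` is a fourth power modulo
`p` if and only if `8 ∣ b`. -/
theorem gauss_biquadratic_two (p : ℕ) [Fact p.Prime] (hp : p % 8 = 1) (a b : ℤ)
    (hab : (p : ℤ) = a ^ 2 + b ^ 2) (ha : Odd a) (hb : Even b) :
    (∃ x : ZMod p, x ^ 4 = 2) ↔ (8 : ℤ) ∣ b := by
  have hprime : p.Prime := Fact.out
  have hp2 : 2 ≤ p := hprime.two_le
  have hp9 : 9 ≤ p := by omega
  obtain ⟨k, hk⟩ := ha
  obtain ⟨c, hc⟩ := hb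
  obtain ⟨T, hT⟩ := Int.even_mul_succ_self k
  -- 4 ∣ b
  have hceven : ∃ d, c = 2 * d := by
    rcases Int.even_or_odd c with ⟨d, hd⟩ | ⟨d, hd⟩
    · exact ⟨d, by omega⟩
    · exfalso
      obtain ⟨D, hD⟩ : ∃ D, d ^ 2 = D := ⟨_, rfl⟩
      have hbad : (p : ℤ) = 8 * T + 16 * D + 16 * d + 5 := by
        rw [hab, hk, hc, hd]
        linear_combination 4 * hT + 16 * hD
      omega
  obtain ⟨d, hd⟩ := hceven
  obtain ⟨D, hD⟩ : ∃ D, d ^ 2 = D := ⟨_, rfl⟩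
  have hpeq : (p : ℤ) = 8 * T + 16 * D + 1 := by
    rw [hab, hk, hc, hd]
    linear_combination 4 * hT + 16 * hD
  obtain ⟨e, he⟩ : ∃ e, p - 1 = 8 * e := ⟨(p - 1) / 8, by omega⟩
  have he0 : 0 < e := by omega
  -- coprimality
  have hcop : Int.gcd a b = 1 := by
    have hg2 : (Int.gcd a b : ℤ) ^ 2 ∣ (p : ℤ) := by
      rw [hab]
      exact dvd_add (pow_dvd_pow_of_dvd (Int.gcd_dvd_left _ _) 2)
        (pow_dvd_pow_of_dvd (Int.gcd_dvd_right _ _) 2)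
    have hg2' : Int.gcd a b ^ 2 ∣ p := by exact_mod_cast hg2
    rcases (hprime.eq_one_or_self_of_dvd _ hg2') with h | h
    · rw [pow_two] at h
      exact Nat.eq_one_of_mul_eq_one_right h
    · exfalso
      have hg : Int.gcd a b ∣ p := dvd_trans (dvd_pow_self _ two_ne_zero) hg2'
      rcases hprime.eq_one_or_self_of_dvd _ hg with h1 | h1
      · rw [h1] at h; simp at h; omega
      · rw [h1] at h; nlinarith [hprime.one_lt]
  have hbne : b ≠ 0 := by
    rintro rfl
    have h1 : a.natAbs = 1 := by simpa [Int.gcd] using hcop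
    have ha2 : a ^ 2 = 1 := by
      rcases Int.natAbs_eq_iff.mp h1 with h | h <;> rw [h] <;> norm_num
    rw [ha2] at hab
    norm_num at hab
    omega
  have hBne : ((b : ZMod p)) ≠ 0 := by
    intro h0
    have hpb : (p : ℤ) ∣ b := (ZMod.intCast_zmod_eq_zero_iff_dvd b p).mp h0
    have hpa2 : (p : ℤ) ∣ a ^ 2 := by
      have h1 : (p : ℤ) ∣ b ^ 2 := hpb.pow two_ne_zero
      have h2 : (p : ℤ) ∣ a ^ 2 + b ^ 2 := hab ▸ dvd_rfl
      simpa using dvd_sub h2 h1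
    have hpint : Prime (p : ℤ) := Int.prime_iff_natAbs_prime.mpr (by simpa using hprime)
    have hpa : (p : ℤ) ∣ a := hpint.dvd_of_dvd_pow hpa2
    have : (p : ℤ) ∣ (Int.gcd a b : ℤ) := Int.dvd_coe_gcd hpa hpb
    rw [hcop] at this
    have := Int.le_of_dvd (by norm_num) this
    omega
  -- gcd (a-b) (a+b) = 1
  have hsodd : Odd (a + b) := ⟨k + c, by omega⟩
  have hgcd_rs : Int.gcd (a - b) (a + b) = 1 := by
    set g := Int.gcd (a - b) (a + b) with hgdef
    have hg1 : (g : ℤ) ∣ a - b := Int.gcd_dvd_left _ _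
    have hg2 : (g : ℤ) ∣ a + b := Int.gcd_dvd_right _ _
    have hga : (g : ℤ) ∣ 2 * a := by
      have := dvd_add hg1 hg2
      rwa [show a - b + (a + b) = 2 * a by ring] at this
    have hgb : (g : ℤ) ∣ 2 * b := by
      have := dvd_sub hg2 hg1
      rwa [show a + b - (a - b) = 2 * b by ring] at this
    have hg2' : (g : ℤ) ∣ (Int.gcd (2 * a) (2 * b) : ℤ) := Int.dvd_coe_gcd hga hgb
    rw [Int.gcd_mul_left, hcop] at hg2'
    have hgodd : ¬ (2 ∣ g) := by
      intro h2g
      have : (g : ℤ) ∣ a + b := hg2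
      have h2ab : (2 : ℤ) ∣ a + b := dvd_trans (by exact_mod_cast h2g) hg2
      rcases hsodd with ⟨m, hm⟩
      omega
    have : (g : ℤ) ∣ 2 := by simpa using hg2'
    have hg2'' : g ∣ 2 := by exact_mod_cast this
    rcases (Nat.dvd_prime Nat.prime_two).mp hg2'' with h | h
    · exact h
    · exact absurd (h ▸ dvd_rfl) hgodd
  have hp4 : p % 4 = 1 := by omega
  have hAB0 : (a : ZMod p) ^ 2 + (b : ZMod p) ^ 2 = 0 := by
    have h0 : ((p : ℤ) : ZMod p) = 0 := by exact_mod_cast ZMod.natCast_self p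
    rw [← h0, hab]; push_cast; ring
  have hA2 : (a : ZMod p) ^ 2 = -((b : ZMod p) ^ 2) := by linear_combination hAB0
  have hS2 : ((a + b : ℤ) : ZMod p) ^ 2 = 2 * (a : ZMod p) * (b : ZMod p) := by
    push_cast; linear_combination hAB0
  have hS4e : ((a + b : ℤ) : ZMod p) ^ (4 * e)
      = (2 : ZMod p) ^ (2 * e) * (-1 : ZMod p) ^ e * (b : ZMod p) ^ (4 * e) := by
    calc ((a + b : ℤ) : ZMod p) ^ (4 * e) = (((a + b : ℤ) : ZMod p) ^ 2) ^ (2 * e) := by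
          rw [← pow_mul]; try ring_nf
    _ = (2 * (a : ZMod p) * (b : ZMod p)) ^ (2 * e) := by rw [hS2]
    _ = 2 ^ (2 * e) * ((a : ZMod p) ^ 2) ^ e * (b : ZMod p) ^ (2 * e) := by
          rw [mul_pow, mul_pow, ← pow_mul]; try ring_nf
    _ = 2 ^ (2 * e) * (-1 : ZMod p) ^ e * (b : ZMod p) ^ (4 * e) := by
          rw [hA2, neg_pow, ← pow_mul]; ring
  have hhalf : p / 2 = 4 * e := by omega
  have hBpow : (b : ZMod p) ^ (4 * e) = 1 := by
    have h1 := (legendreSym.eq_pow p b).symm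
    rw [hhalf] at h1
    rw [h1, jacobiSym.legendreSym.to_jacobiSym, aux_leg_b p hp a b hbne hab hcop]
    simp
  set t : ℕ := (a + b).natAbs with htdef
  have htodd : t % 2 = 1 := Nat.odd_iff.mp (Int.natAbs_odd.mpr hsodd)
  obtain ⟨n, hn⟩ : ∃ n : ℤ, n = T + (2 * k + 1) * d + 2 * D := ⟨_, rfl⟩
  have htsq : (t : ℤ) ^ 2 = 8 * n + 1 := by
    have habs : ((t : ℤ)) = a + b ∨ ((t : ℤ)) = -(a + b) := by
      rcases Int.natAbs_eq (a + b) with h | h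
      · left; omega
      · right; omega
    rcases habs with h | h <;> rw [h, hk, hc, hd, hn] <;> linear_combination 4 * hT + 16 * hD
  have hchi := aux_chi8 t htodd n htsq
  have hsval := aux_leg_s p hp (a + b) (a - b) hsodd (by linear_combination 2 * hab) hgcd_rs
  rw [← htdef, hchi] at hsval
  have hjac : jacobiSym (a + b) p = (if Even n then 1 else -1 : ℤ) := by
    by_cases hev : Even n <;> simp [hev] at hsval ⊢ <;> linarith
  have hSpow : ((a + b : ℤ) : ZMod p) ^ (4 * e) = ((if Even n then 1 else -1 : ℤ) : ZMod p) := by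
    have h1 := (legendreSym.eq_pow p (a + b)).symm
    rw [hhalf] at h1
    rw [h1, jacobiSym.legendreSym.to_jacobiSym, hjac]
  have hsq : (-1 : ZMod p) ^ e * (-1 : ZMod p) ^ e = 1 := by
    rw [← pow_add]
    exact Even.neg_one_pow ⟨e, rfl⟩
  have h2val : (2 : ZMod p) ^ (2 * e)
      = ((if Even n then 1 else -1 : ℤ) : ZMod p) * (-1 : ZMod p) ^ e := by
    rw [hBpow, mul_one, hSpow] at hS4e
    calc (2 : ZMod p) ^ (2 * e)
        = (2 : ZMod p) ^ (2 * e) * ((-1 : ZMod p) ^ e * (-1 : ZMod p) ^ e) := by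
          rw [hsq, mul_one]
    _ = ((2 : ZMod p) ^ (2 * e) * (-1 : ZMod p) ^ e) * (-1 : ZMod p) ^ e := by ring
    _ = ((if Even n then 1 else -1 : ℤ) : ZMod p) * (-1 : ZMod p) ^ e := by rw [← hS4e]
  have h2ne : (2 : ZMod p) ≠ 0 := by
    intro h
    have h1 : ((2 : ℤ) : ZMod p) = 0 := by exact_mod_cast h
    have h2 : (p : ℤ) ∣ 2 := (ZMod.intCast_zmod_eq_zero_iff_dvd 2 p).mp h1
    have := Int.le_of_dvd (by norm_num) h2
    omega
  have hm1 : (-1 : ZMod p) ≠ 1 := by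
    intro h
    apply h2ne
    linear_combination -h
  have hkey : ((Even n ↔ Even e) ↔ (8 : ℤ) ∣ b) := by
    obtain ⟨M, hM⟩ : ∃ M : ℤ, n - (T + d) = 2 * M := ⟨k * d + D, by rw [hn, ← hD]; ring⟩
    rw [Int.even_iff, Nat.even_iff]
    omega
  rw [aux_pow4 p e he he0 2 h2ne, h2val]
  by_cases hev : Even n <;> by_cases hee : Even e
  · rw [if_pos hev, Even.neg_one_pow hee]
    simp only [Int.cast_one, one_mul]
    exact iff_of_true trivial (hkey.mp (iff_of_true hev hee))
  · rw [if_pos hev, Odd.neg_one_pow (Nat.not_even_iff_odd.mp hee)]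
    simp only [Int.cast_one, one_mul]
    exact iff_of_false hm1 (fun h => hee ((hkey.mpr h).mp hev))
  · rw [if_neg hev, Even.neg_one_pow hee]
    simp only [Int.cast_neg, Int.cast_one, mul_one]
    exact iff_of_false hm1 (fun h => hev ((hkey.mpr h).mpr hee))
  · rw [if_neg hev, Odd.neg_one_pow (Nat.not_even_iff_odd.mp hee)]
    simp only [Int.cast_neg, Int.cast_one]
    refine iff_of_true (by ring) (hkey.mp (iff_of_false hev hee))
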